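/- Let f : 2^E → ℝ≥0 be submodular. Then for any two disjoint sets A, B ⊆ E with |A| = a ≥ 1 and |B| = b ≥ 1, the function g(S) := |S|·f(S) satisfies Σ_{e∈B} (g(A∪{e}) − g(A)) ≥ ((a+1)/(a+b)) · (g(A∪B) − g(A)). -/

import Mathlib

open Finset

lemma submod_sum_aux {E : Type*} [DecidableEq E]
    (f : Finset E → ℝ)
    (hsub : ∀ S T : Finset E, f S + f T ≥ f (S ∪ T) + f (S ∩ T)) :
    ∀ B A : Finset E, Disjoint A B →
      ∑ e ∈ B, (f (insert e A) - f A) ≥ f (A ∪ B) - f A := by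
  intro B
  induction B using Finset.induction_on with
  | empty => intro A _; simp
  | insert x B' hx ih =>
    intro A hd
    have hd' : Disjoint A B' := hd.mono_right (Finset.subset_insert x B')
    have ihA := ih A hd'
    have key := hsub (insert x A) (A ∪ B')
    have hu : insert x A ∪ (A ∪ B') = A ∪ insert x B' := by
      ext y; simp [or_comm, or_left_comm, or_assoc]
    have hi : insert x A ∩ (A ∪ B') = A := by
      ext y
      simp only [Finset.mem_inter, Finset.mem_insert, Finset.mem_union]
      constructor
      · rintro ⟨h1 | h1, h2 | h2⟩ <;> first | assumption | (subst h1; exact absurd h2 hx)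
      · intro h; exact ⟨Or.inr h, Or.inl h⟩
    rw [hu, hi] at key
    rw [Finset.sum_insert hx]
    linarith

theorem stmt_7 {E : Type*} [Fintype E] [DecidableEq E]
    (f : Finset E → ℝ) (hnn : ∀ S, 0 ≤ f S)
    (hsub : ∀ S T : Finset E, f S + f T ≥ f (S ∪ T) + f (S ∩ T))
    (g : Finset E → ℝ) (hg : ∀ S : Finset E, g S = (S.card : ℝ) * f S)
    (A B : Finset E) (a b : ℕ) (ha : A.card = a) (hb : B.card = b)
    (ha1 : 1 ≤ a) (hb1 : 1 ≤ b) (hAB : Disjoint A B) :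
    ∑ e ∈ B, (g (insert e A) - g A) ≥
      (((a : ℝ) + 1) / ((a : ℝ) + b)) * (g (A ∪ B) - g A) := by
  have key := submod_sum_aux f hsub B A hAB
  have hcardU : ((A ∪ B).card : ℝ) = a + b := by
    rw [Finset.card_union_of_disjoint hAB, ha, hb]; push_cast; ring
  have hsum : ∑ e ∈ B, (g (insert e A) - g A)
      = ∑ e ∈ B, (((a : ℝ) + 1) * f (insert e A) - a * f A) := by
    apply Finset.sum_congr rfl
    intro e he
    have heA : e ∉ A := fun h => hAB.forall_ne_finset h he (rfl)
    rw [hg, hg, Finset.card_insert_of_notMem heA, ha]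
    push_cast; ring
  rw [hsum, hg (A ∪ B), hg A, hcardU, ha]
  have hSum2 : ∑ e ∈ B, (((a : ℝ) + 1) * f (insert e A) - a * f A)
      = ((a : ℝ) + 1) * (∑ e ∈ B, (f (insert e A) - f A)) + (b : ℝ) * f A := by
    rw [Finset.sum_sub_distrib, Finset.sum_sub_distrib, Finset.sum_const,
      Finset.sum_const, hb, ← Finset.mul_sum]
    push_cast; ring
  rw [hSum2]
  have hpos : (0:ℝ) < (a : ℝ) + b := by positivity
  rw [ge_iff_le, div_mul_eq_mul_div, div_le_iff₀ hpos]
  have hfA := hnn A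
  have hb1' : (1:ℝ) ≤ b := by exact_mod_cast hb1
  have ha0 : (0:ℝ) ≤ a := Nat.cast_nonneg a
  nlinarith [mul_nonneg (mul_nonneg ((zero_le_one).trans hb1') (sub_nonneg.mpr hb1')) hfA,
    mul_le_mul_of_nonneg_left key (by positivity : (0:ℝ) ≤ ((a:ℝ)+1)*((a:ℝ)+b))]
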